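/- Let B be a standard graded artinian k-algebra, let A = B ⊗_k k[x]/(x²), let ℓ̄ ∈ B₁ be a linear form and ℓ = ℓ̄ + x ∈ A₁. Fix integers i, t ≥ 1, assume B_{i+t} ≠ 0 and that t is invertible in k. Then the multiplication map ·ℓ^t : A_i → A_{i+t} has full rank if and only if the maps ·ℓ̄^{t−1} : B_i → B_{i+t−1} and ·ℓ̄^{t+1} : B_{i−1} → B_{i+t} have full rank for the same reason. Moreover, if the matrices M̄_i^{t−1} and M̄_{i−1}^{t+1} representing these two maps are square of sizes n and m respectively, then the matrix M_i^t representing ·ℓ^t is square of size n+m and det(M_i^t) = (−1)^{m(n+1)} · det(M̄_i^{t−1}) · det(M̄_{i−1}^{t+1}) · t^{n−m}. -/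

import Mathlib

open scoped BigOperators

/-- Multiplication by `a` is injective as a map on the subspace `V`. -/
def MulInjOn {k R : Type*} [Field k] [CommRing R] [Algebra k R]
    (V : Submodule k R) (a : R) : Prop :=
  ∀ v ∈ V, a * v = 0 → v = 0

/-- Multiplication by `a` maps the subspace `V` onto the subspace `W`. -/
def MulSurjOnto {k R : Type*} [Field k] [CommRing R] [Algebra k R]
    (V W : Submodule k R) (a : R) : Prop :=
  ∀ w ∈ W, ∃ v ∈ V, a * v = w

/-- The multiplication map `·a : V → W` has full rank: it is injective or surjective. -/
def MulFullRank {k R : Type*} [Field k] [CommRing R] [Algebra k R]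
    (V W : Submodule k R) (a : R) : Prop :=
  MulInjOn V a ∨ MulSurjOnto V W a

/-- `𝒜` is the grading of a standard graded artinian `k`-algebra structure on `R`:
the components form an internal direct sum, vanish in negative degrees, are
multiplicative, the degree-zero part is spanned by `1`, the algebra is generated in
degree one, and `R` is a finite-dimensional `k`-vector space (equivalently, artinian). -/
structure IsStdGradedArtinian (k : Type*) [Field k] (R : Type*) [CommRing R] [Algebra k R]
    (𝒜 : ℤ → Submodule k R) : Prop where
  internal : DirectSum.IsInternal 𝒜
  one_mem : (1 : R) ∈ 𝒜 0
  mul_mem : ∀ {i j : ℤ} {a b : R}, a ∈ 𝒜 i → b ∈ 𝒜 j → a * b ∈ 𝒜 (i + j)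
  neg_bot : ∀ i : ℤ, i < 0 → 𝒜 i = ⊥
  zero_spanOne : 𝒜 0 = Submodule.span k {(1 : R)}
  succ_eq : ∀ i : ℤ, 0 ≤ i → 𝒜 (i + 1) = 𝒜 1 * 𝒜 i
  finiteDim : FiniteDimensional k R

/-- `A` (graded by `ℬ`) is the extension `B ⊗ₖ k[x]/(x^d)` of `B` (graded by `𝒜`):
`φ` is the canonical inclusion of `B`, `x` has degree one with `x^d = 0`, and each
graded component decomposes as `ℬ j = ⊕_{q=0}^{d-1} x^q · φ(𝒜 (j - q))`. -/
structure IsCIExtension {k B A : Type*} [Field k] [CommRing B] [Algebra k B]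
    [CommRing A] [Algebra k A]
    (𝒜 : ℤ → Submodule k B) (ℬ : ℤ → Submodule k A)
    (φ : B →ₐ[k] A) (x : A) (d : ℕ) : Prop where
  map_mem : ∀ (j : ℤ) (b : B), b ∈ 𝒜 j → φ b ∈ ℬ j
  x_mem : x ∈ ℬ 1
  x_pow : x ^ d = 0
  decomp_mem : ∀ (j : ℤ) (f : Fin d → B), (∀ q : Fin d, f q ∈ 𝒜 (j - ((q : ℕ) : ℤ))) →
    (∑ q : Fin d, x ^ (q : ℕ) * φ (f q)) ∈ ℬ j
  decomp_exists : ∀ (j : ℤ), ∀ c ∈ ℬ j, ∃ f : Fin d → B,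
    (∀ q : Fin d, f q ∈ 𝒜 (j - ((q : ℕ) : ℤ))) ∧ c = ∑ q : Fin d, x ^ (q : ℕ) * φ (f q)
  decomp_unique : ∀ (j : ℤ) (f : Fin d → B), (∀ q : Fin d, f q ∈ 𝒜 (j - ((q : ℕ) : ℤ))) →
    (∑ q : Fin d, x ^ (q : ℕ) * φ (f q)) = 0 → ∀ q : Fin d, f q = 0

/-- `A` (graded by `ℬ`) is the extension `B ⊗ₖ k[x₁,…,xₙ]/(x₁^{d₁},…,xₙ^{dₙ})` of `B`
(graded by `𝒜`). -/
structure IsMultiCIExtension {k B A : Type*} [Field k] [CommRing B] [Algebra k B]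
    [CommRing A] [Algebra k A] {n : ℕ}
    (𝒜 : ℤ → Submodule k B) (ℬ : ℤ → Submodule k A)
    (φ : B →ₐ[k] A) (x : Fin n → A) (dv : Fin n → ℕ) : Prop where
  map_mem : ∀ (j : ℤ) (b : B), b ∈ 𝒜 j → φ b ∈ ℬ j
  x_mem : ∀ m : Fin n, x m ∈ ℬ 1
  x_pow : ∀ m : Fin n, x m ^ dv m = 0
  decomp_mem : ∀ (j : ℤ) (f : ((m : Fin n) → Fin (dv m)) → B),
    (∀ e, f e ∈ 𝒜 (j - ∑ m : Fin n, ((e m : ℕ) : ℤ))) →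
    (∑ e : (m : Fin n) → Fin (dv m), (∏ m : Fin n, x m ^ ((e m : ℕ))) * φ (f e)) ∈ ℬ j
  decomp_exists : ∀ (j : ℤ), ∀ c ∈ ℬ j, ∃ f : ((m : Fin n) → Fin (dv m)) → B,
    (∀ e, f e ∈ 𝒜 (j - ∑ m : Fin n, ((e m : ℕ) : ℤ))) ∧
    c = ∑ e : (m : Fin n) → Fin (dv m), (∏ m : Fin n, x m ^ ((e m : ℕ))) * φ (f e)
  decomp_unique : ∀ (j : ℤ) (f : ((m : Fin n) → Fin (dv m)) → B),
    (∀ e, f e ∈ 𝒜 (j - ∑ m : Fin n, ((e m : ℕ) : ℤ))) →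
    (∑ e : (m : Fin n) → Fin (dv m), (∏ m : Fin n, x m ^ ((e m : ℕ))) * φ (f e)) = 0 →
    ∀ e, f e = 0

/-- The weak Lefschetz property. -/
def HasWLP {k R : Type*} [Field k] [CommRing R] [Algebra k R]
    (𝒜 : ℤ → Submodule k R) : Prop :=
  ∃ ℓ ∈ 𝒜 1, ∀ i : ℤ, 0 ≤ i → MulFullRank (𝒜 i) (𝒜 (i + 1)) ℓ

/-- The strong Lefschetz property. -/
def HasSLP {k R : Type*} [Field k] [CommRing R] [Algebra k R]
    (𝒜 : ℤ → Submodule k R) : Prop :=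
  ∃ ℓ ∈ 𝒜 1, ∀ i : ℤ, 0 ≤ i → ∀ t : ℕ, 1 ≤ t → MulFullRank (𝒜 i) (𝒜 (i + t)) (ℓ ^ t)

/-- The Hilbert function of the graded algebra. -/
noncomputable def hilb {k R : Type*} [Field k] [CommRing R] [Algebra k R]
    (𝒜 : ℤ → Submodule k R) (i : ℤ) : ℕ :=
  Module.finrank k (𝒜 i)

/-- The algebra is almost centered. -/
def AlmostCentered {k R : Type*} [Field k] [CommRing R] [Algebra k R]
    (𝒜 : ℤ → Submodule k R) : Prop :=
  ∀ i j : ℤ, i < j →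
    (hilb 𝒜 i < hilb 𝒜 j → ∀ s : ℕ, hilb 𝒜 (i - s) ≤ hilb 𝒜 (j + s)) ∧
    (hilb 𝒜 j < hilb 𝒜 i → ∀ s : ℕ, hilb 𝒜 (j + s) ≤ hilb 𝒜 (i - s))

/-- `binomZ t j` is the binomial coefficient `t` choose `j` for an integer `j`,
equal to `0` for `j < 0` or `j > t`. -/
def binomZ (t : ℕ) (j : ℤ) : ℤ := if 0 ≤ j then (t.choose j.toNat : ℤ) else 0

/-- The `(d-p) × (d-p)` integer matrix `C_{t,p,d}` whose `(r,c)` entry (with `1 ≤ r,c ≤ d-p`)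
is `binom(t, d+1-r-c)`. -/
def Cmat (t p d : ℕ) : Matrix (Fin (d - p)) (Fin (d - p)) ℤ :=
  Matrix.of fun r c => binomZ t ((d : ℤ) - 1 - (r : ℕ) - (c : ℕ))

/-- The characteristic of `k` is zero, or a prime not dividing the integer `N`. -/
def CharCond (k : Type*) [Field k] (N : ℤ) : Prop :=
  CharZero k ∨ ∃ p : ℕ, p.Prime ∧ CharP k p ∧ ¬ ((p : ℤ) ∣ N)

section Helpers
variable {k B A : Type} [Field k] [CommRing B] [Algebra k B] [CommRing A] [Algebra k A]
variable {𝒜 : ℤ → Submodule k B} {ℬ : ℤ → Submodule k A} {φ : B →ₐ[k] A} {x : A}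

lemma sum_two (f : Fin 2 → B) :
    (∑ q : Fin 2, x ^ (q : ℕ) * φ (f q)) = φ (f 0) + x * φ (f 1) := by
  simp [Fin.sum_univ_two]

lemma mem2 (hext : IsCIExtension 𝒜 ℬ φ x 2) {j : ℤ} {b0 b1 : B}
    (h0 : b0 ∈ 𝒜 j) (h1 : b1 ∈ 𝒜 (j - 1)) : φ b0 + x * φ b1 ∈ ℬ j := by
  have := hext.decomp_mem j ![b0, b1] ?_
  · rwa [sum_two] at this
  · intro q
    fin_cases q <;> simpa

lemma unique2 (hext : IsCIExtension 𝒜 ℬ φ x 2) {j : ℤ} {b0 b1 : B}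
    (h0 : b0 ∈ 𝒜 j) (h1 : b1 ∈ 𝒜 (j - 1)) (h : φ b0 + x * φ b1 = 0) :
    b0 = 0 ∧ b1 = 0 := by
  have := hext.decomp_unique j ![b0, b1] ?_ (by rwa [sum_two])
  · exact ⟨this 0, this 1⟩
  · intro q; fin_cases q <;> simpa

lemma exists2 (hext : IsCIExtension 𝒜 ℬ φ x 2) {j : ℤ} {c : A} (hc : c ∈ ℬ j) :
    ∃ b0 b1 : B, b0 ∈ 𝒜 j ∧ b1 ∈ 𝒜 (j - 1) ∧ c = φ b0 + x * φ b1 := by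
  obtain ⟨f, hf, hc⟩ := hext.decomp_exists j c hc
  refine ⟨f 0, f 1, by simpa using hf 0, by simpa using hf 1, by rwa [sum_two] at hc⟩

lemma phi_inj (hext : IsCIExtension 𝒜 ℬ φ x 2) {j : ℤ} {b : B}
    (hb : b ∈ 𝒜 j) (h : φ b = 0) : b = 0 :=
  (unique2 hext hb (Submodule.zero_mem _) (by simp [h])).1

lemma xsq (hext : IsCIExtension 𝒜 ℬ φ x 2) : x * x = 0 := by
  have := hext.x_pow; rwa [pow_two] at this

lemma hpow_mem (hB : IsStdGradedArtinian k B 𝒜) {ℓ : B} (hℓ : ℓ ∈ 𝒜 1)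
    {j : ℤ} {b : B} (hb : b ∈ 𝒜 j) (s : ℕ) : ℓ ^ s * b ∈ 𝒜 (j + s) := by
  induction s with
  | zero => simpa using hb
  | succ s ih =>
      have := hB.mul_mem hℓ ih
      rw [show (1 : ℤ) + (j + s) = j + ((s : ℕ) + 1 : ℕ) by push_cast; ring] at this
      rwa [pow_succ', mul_assoc]

lemma mem_deg (h : a = b) {v : B} (hv : v ∈ 𝒜 a) : v ∈ 𝒜 b := h ▸ hv

lemma ell_pow (hext : IsCIExtension 𝒜 ℬ φ x 2) (ℓ : B) (s : ℕ) :
    (φ ℓ + x) ^ (s + 1) = φ (ℓ ^ (s + 1)) + ((s : A) + 1) * (x * φ (ℓ ^ s)) := by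
  induction s with
  | zero => simp
  | succ s ih =>
      have hx2 := xsq hext
      rw [pow_succ, ih]
      simp only [map_pow, map_mul, Nat.cast_add, Nat.cast_one, map_add]
      push_cast
      linear_combination (((s : A) + 1) * φ ℓ ^ s) * hext.x_pow
end Helpers

section Act
variable {k B A : Type} [Field k] [CommRing B] [Algebra k B] [CommRing A] [Algebra k A]
variable {𝒜 : ℤ → Submodule k B} {ℬ : ℤ → Submodule k A} {φ : B →ₐ[k] A} {x : A}

lemma mul_decomp (hext : IsCIExtension 𝒜 ℬ φ x 2) (ℓ : B) (s : ℕ) (b b' : B) :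
    (φ ℓ + x) ^ (s + 1) * (φ b + x * φ b') =
      φ (ℓ ^ (s + 1) * b) + x * φ ((s + 1 : B) * (ℓ ^ s * b) + ℓ ^ (s + 1) * b') := by
  rw [ell_pow hext]
  simp only [map_add, map_mul, map_pow, map_natCast, map_one]
  push_cast
  linear_combination (((s : A) + 1) * φ ℓ ^ s * φ b') * hext.x_pow
end Act

section Part1
variable {k B A : Type} [Field k] [CommRing B] [Algebra k B] [CommRing A] [Algebra k A]
variable {𝒜 : ℤ → Submodule k B} {ℬ : ℤ → Submodule k A} {φ : B →ₐ[k] A} {x : A}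

lemma part1 (hB : IsStdGradedArtinian k B 𝒜)
    (hext : IsCIExtension 𝒜 ℬ φ x 2)
    {ℓbar : B} (hℓbar : ℓbar ∈ 𝒜 1)
    (i t : ℕ) (ht : 1 ≤ t) (htinv : (t : k) ≠ 0) :
    (MulFullRank (ℬ (i : ℤ)) (ℬ ((i : ℤ) + t)) ((φ ℓbar + x) ^ t) ↔
      ((MulInjOn (𝒜 (i : ℤ)) (ℓbar ^ (t - 1)) ∧
          MulInjOn (𝒜 ((i : ℤ) - 1)) (ℓbar ^ (t + 1))) ∨
       (MulSurjOnto (𝒜 (i : ℤ)) (𝒜 ((i : ℤ) + t - 1)) (ℓbar ^ (t - 1)) ∧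
          MulSurjOnto (𝒜 ((i : ℤ) - 1)) (𝒜 ((i : ℤ) + t)) (ℓbar ^ (t + 1))))) := by
  obtain ⟨s, rfl⟩ : ∃ s, t = s + 1 := ⟨t - 1, by omega⟩
  simp only [Nat.add_sub_cancel]
  set c : k := (s : k) + 1 with hcdef
  have hc : c ≠ 0 := by simpa using htinv
  have csmul : ∀ bb : B, ((s : B) + 1) * bb = c • bb := by
    intro bb
    rw [Algebra.smul_def]
    simp [hcdef]
  have cmem : ∀ (j : ℤ) (bb : B), bb ∈ 𝒜 j → ((s : B) + 1) * bb ∈ 𝒜 j := by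
    intro j bb hbb; rw [csmul]; exact Submodule.smul_mem _ _ hbb
  constructor
  · rintro (hinj | hsur)
    · left
      constructor
      · intro b hb hb0
        have h1 : ℓbar ^ (s + 1) * b = 0 := by
          rw [pow_succ', mul_assoc, hb0, mul_zero]
        have key : (φ ℓbar + x) ^ (s + 1) * φ b = 0 := by
          have hd := mul_decomp hext ℓbar s b 0
          rw [map_zero, mul_zero, add_zero] at hd
          rw [hd, h1, hb0]
          simp
        exact phi_inj hext hb (hinj _ (hext.map_mem _ _ hb) key)
      · intro b' hb' h0
        have hm1 : ℓbar * b' ∈ 𝒜 (i : ℤ) :=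
          mem_deg (by ring) (hB.mul_mem hℓbar hb')
        have hm2 : -(((s : B) + 1) * b') ∈ 𝒜 ((i : ℤ) - 1) :=
          Submodule.neg_mem _ (cmem _ _ hb')
        have hv : φ (ℓbar * b') + x * φ (-(((s : B) + 1) * b')) ∈ ℬ (i : ℤ) :=
          mem2 hext hm1 hm2
        have hℓv : (φ ℓbar + x) ^ (s + 1) * (φ (ℓbar * b') + x * φ (-(((s : B) + 1) * b'))) = 0 := by
          rw [mul_decomp hext]
          have e1 : ℓbar ^ (s + 1) * (ℓbar * b') = 0 := by
            rw [show ℓbar ^ (s + 1) * (ℓbar * b') = ℓbar ^ (s + 1 + 1) * b' by ring, h0]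
          have e2 : ((s : B) + 1) * (ℓbar ^ s * (ℓbar * b')) +
              ℓbar ^ (s + 1) * -(((s : B) + 1) * b') = 0 := by ring
          rw [e1, e2]
          simp
        have hv0 := hinj _ hv hℓv
        obtain ⟨-, h2⟩ := unique2 hext hm1 hm2 hv0
        have : ((s : B) + 1) * b' = 0 := by linear_combination -h2
        rw [csmul] at this
        exact (smul_eq_zero.mp this).resolve_left hc
    · right
      constructor
      · intro u hu
        have hxu : x * φ u ∈ ℬ ((i : ℤ) + (s + 1 : ℕ)) := by
          have := mem2 hext (Submodule.zero_mem _) hu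
          rwa [map_zero, zero_add] at this
        obtain ⟨v, hv, hℓv⟩ := hsur _ hxu
        obtain ⟨b, b', hb, hb', rfl⟩ := exists2 hext hv
        rw [mul_decomp hext] at hℓv
        have h' : φ (ℓbar ^ (s + 1) * b) +
            x * φ ((((s : B) + 1) * (ℓbar ^ s * b) + ℓbar ^ (s + 1) * b') - u) = 0 := by
          rw [map_sub]
          linear_combination hℓv
        have hm1 : ℓbar ^ (s + 1) * b ∈ 𝒜 ((i : ℤ) + (s + 1 : ℕ)) :=
          mem_deg (by push_cast; ring) (hpow_mem hB hℓbar hb (s + 1))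
        have hm2 : (((s : B) + 1) * (ℓbar ^ s * b) + ℓbar ^ (s + 1) * b') - u ∈
            𝒜 ((i : ℤ) + (s + 1 : ℕ) - 1) := by
          refine Submodule.sub_mem _ (Submodule.add_mem _ ?_ ?_) ?_
          · exact cmem _ _ (mem_deg (by push_cast; ring) (hpow_mem hB hℓbar hb s))
          · exact mem_deg (by push_cast; ring) (hpow_mem hB hℓbar hb' (s + 1))
          · exact hu
        obtain ⟨-, h2⟩ := unique2 hext hm1 hm2 h'
        refine ⟨((s : B) + 1) * b + ℓbar * b', ?_, by linear_combination h2⟩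
        exact Submodule.add_mem _ (cmem _ _ hb) (mem_deg (by ring) (hB.mul_mem hℓbar hb'))
      · intro w hw
        obtain ⟨v, hv, hℓv⟩ := hsur _ (hext.map_mem _ _ hw)
        obtain ⟨b, b', hb, hb', rfl⟩ := exists2 hext hv
        rw [mul_decomp hext] at hℓv
        have h' : φ (ℓbar ^ (s + 1) * b - w) +
            x * φ (((s : B) + 1) * (ℓbar ^ s * b) + ℓbar ^ (s + 1) * b') = 0 := by
          rw [map_sub]
          linear_combination hℓv
        have hm1 : ℓbar ^ (s + 1) * b - w ∈ 𝒜 ((i : ℤ) + (s + 1 : ℕ)) :=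
          Submodule.sub_mem _
            (mem_deg (by push_cast; ring) (hpow_mem hB hℓbar hb (s + 1))) hw
        have hm2 : ((s : B) + 1) * (ℓbar ^ s * b) + ℓbar ^ (s + 1) * b' ∈
            𝒜 ((i : ℤ) + (s + 1 : ℕ) - 1) := by
          refine Submodule.add_mem _ ?_ ?_
          · exact cmem _ _ (mem_deg (by push_cast; ring) (hpow_mem hB hℓbar hb s))
          · exact mem_deg (by push_cast; ring) (hpow_mem hB hℓbar hb' (s + 1))
        obtain ⟨h1, h2⟩ := unique2 hext hm1 hm2 h'
        have h1' : ℓbar ^ (s + 1) * b = w := by linear_combination h1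
        have h3 : ℓbar ^ (s + 1 + 1) * b' = -(((s : B) + 1) * w) := by
          linear_combination ℓbar * h2 - ((s : B) + 1) * h1'
        refine ⟨(-c⁻¹) • b', Submodule.smul_mem _ _ hb', ?_⟩
        rw [mul_smul_comm, h3, csmul]
        simp [smul_smul, inv_mul_cancel₀ hc]
  · rintro (⟨inj1, inj2⟩ | ⟨surj1, surj2⟩)
    · left
      intro v hv hℓv
      obtain ⟨b, b', hb, hb', rfl⟩ := exists2 hext hv
      rw [mul_decomp hext] at hℓv
      have hm1 : ℓbar ^ (s + 1) * b ∈ 𝒜 ((i : ℤ) + (s + 1 : ℕ)) :=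
        mem_deg (by push_cast; ring) (hpow_mem hB hℓbar hb (s + 1))
      have hm2 : ((s : B) + 1) * (ℓbar ^ s * b) + ℓbar ^ (s + 1) * b' ∈
          𝒜 ((i : ℤ) + (s + 1 : ℕ) - 1) := by
        refine Submodule.add_mem _ ?_ ?_
        · exact cmem _ _ (mem_deg (by push_cast; ring) (hpow_mem hB hℓbar hb s))
        · exact mem_deg (by push_cast; ring) (hpow_mem hB hℓbar hb' (s + 1))
      obtain ⟨h1, h2⟩ := unique2 hext hm1 hm2 hℓv
      have h3 : ℓbar ^ (s + 1 + 1) * b' = 0 := by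
        linear_combination ℓbar * h2 - ((s : B) + 1) * h1
      have hb'0 : b' = 0 := inj2 b' hb' h3
      have h4 : ((s : B) + 1) * (ℓbar ^ s * b) = 0 := by
        rw [hb'0] at h2
        linear_combination h2
      rw [csmul] at h4
      have h5 : ℓbar ^ s * b = 0 := (smul_eq_zero.mp h4).resolve_left hc
      have hb0 : b = 0 := inj1 b hb h5
      rw [hb0, hb'0]
      simp
    · right
      intro w hw
      obtain ⟨c0, c1, hc0, hc1, rfl⟩ := exists2 hext hw
      obtain ⟨b, hbmem, hb1⟩ := surj1 (c⁻¹ • c1) (Submodule.smul_mem _ _ hc1)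
      obtain ⟨b2, hb2mem, hb2⟩ := surj2 (c0 - ℓbar ^ (s + 1) * b)
        (Submodule.sub_mem _ hc0 (mem_deg (by push_cast; ring) (hpow_mem hB hℓbar hbmem (s + 1))))
      have key : ((s : B) + 1) * (ℓbar ^ s * b) = c1 := by
        rw [hb1, csmul, smul_smul, mul_inv_cancel₀ hc, one_smul]
      refine ⟨φ (b + ℓbar * b2) + x * φ (-(((s : B) + 1) * b2)), ?_, ?_⟩
      · refine mem2 hext (Submodule.add_mem _ hbmem (mem_deg (by ring) (hB.mul_mem hℓbar hb2mem)))
          (Submodule.neg_mem _ (cmem _ _ hb2mem))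
      · rw [mul_decomp hext]
        have e1 : ℓbar ^ (s + 1) * (b + ℓbar * b2) = c0 := by
          linear_combination hb2
        have e2 : ((s : B) + 1) * (ℓbar ^ s * (b + ℓbar * b2)) +
            ℓbar ^ (s + 1) * -(((s : B) + 1) * b2) = c1 := by
          linear_combination key
        rw [e1, e2]

open Fin.CommRing in
lemma rot_pow (N : ℕ) [NeZero N] (q : ℕ) (i : Fin N) :
    ((finRotate N) ^ q) i = i + (q : Fin N) := by
  rcases N with _ | M
  · exact absurd rfl (NeZero.ne 0)
  · induction q with
    | zero => simp
    | succ q ih =>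
        rw [pow_succ', Equiv.Perm.mul_apply, ih, finRotate_succ_apply, Nat.cast_add, Nat.cast_one]
        ring
lemma sign_rot_pow (N q : ℕ) :
    Equiv.Perm.sign ((finRotate (N + 1)) ^ q) = ((-1 : ℤˣ) ^ N) ^ q := by
  rw [map_pow, sign_finRotate, Nat.add_sub_cancel]

-- the permutation we need
lemma sigma_eq (m n : ℕ) (hmn : 0 < m + n) :
    haveI : NeZero (m + n) := ⟨by omega⟩
    ((finSumFinEquiv.symm : Fin (m+n) ≃ Fin m ⊕ Fin n).trans
      ((Equiv.sumComm (Fin m) (Fin n)).trans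
        (((finCongr (by omega : m + n = n + m)).trans
          (finSumFinEquiv.symm : Fin (n+m) ≃ Fin n ⊕ Fin m)).symm)))
      = (finRotate (m+n)) ^ n := by
  haveI : NeZero (m + n) := ⟨by omega⟩
  ext i
  rw [rot_pow]
  simp only [Equiv.trans_apply, Equiv.symm_trans_apply, finCongr_symm, Equiv.symm_symm]
  refine Fin.addCases (fun p => ?_) (fun p => ?_) i
  · rw [finSumFinEquiv_symm_apply_castAdd]
    simp only [Equiv.sumComm_apply, Sum.swap_inl, finSumFinEquiv_apply_right, finCongr_apply]
    simp only [Fin.ext_iff, Fin.coe_cast, Fin.coe_natAdd, Fin.coe_castAdd, Fin.val_add,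
      Fin.val_natCast]
    have hp := p.isLt
    have h1 : n % (m + n) = n := Nat.mod_eq_of_lt (by omega)
    have h2 : (↑p + n % (m + n)) % (m + n) = ↑p + n := by
      rw [h1]; exact Nat.mod_eq_of_lt (by omega)
    omega
  · rw [finSumFinEquiv_symm_apply_natAdd]
    simp only [Equiv.sumComm_apply, Sum.swap_inr, finSumFinEquiv_apply_left, finCongr_apply]
    simp only [Fin.ext_iff, Fin.coe_cast, Fin.coe_natAdd, Fin.coe_castAdd, Fin.val_add,
      Fin.val_natCast]
    have hp := p.isLt
    have h2 : (m + ↑p + n % (m + n)) % (m + n) = ↑p := by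
      rcases Nat.eq_zero_or_pos m with hm | hm
      · subst hm; simp [Nat.mod_self, Nat.mod_eq_of_lt hp]
      · have h1 : n % (m + n) = n := Nat.mod_eq_of_lt (by omega)
        rw [h1, show m + ↑p + n = (m + n) + ↑p by ring, Nat.add_mod_left,
          Nat.mod_eq_of_lt (by omega)]
    omega

section Part2
variable {k B A : Type} [Field k] [CommRing B] [Algebra k B] [CommRing A] [Algebra k A]
variable {𝒜 : ℤ → Submodule k B} {ℬ : ℤ → Submodule k A} {φ : B →ₐ[k] A} {x : A}

lemma part2 (hB : IsStdGradedArtinian k B 𝒜)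
    (hext : IsCIExtension 𝒜 ℬ φ x 2)
    {ℓbar : B} (hℓbar : ℓbar ∈ 𝒜 1)
    (i t : ℕ) (ht : 1 ≤ t) (htinv : (t : k) ≠ 0)
    (n m : ℕ)
    (b1 : Module.Basis (Fin n) k (𝒜 (i : ℤ))) (b2 : Module.Basis (Fin n) k (𝒜 ((i : ℤ) + t - 1)))
    (b3 : Module.Basis (Fin m) k (𝒜 ((i : ℤ) - 1))) (b4 : Module.Basis (Fin m) k (𝒜 ((i : ℤ) + t)))
    (M : Matrix (Fin m ⊕ Fin n) (Fin n ⊕ Fin m) k)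
    (N1 : Matrix (Fin n) (Fin n) k) (N2 : Matrix (Fin m) (Fin m) k)
    (hM1 : ∀ c : Fin n, (φ ℓbar + x) ^ t * φ (b1 c : B) =
        (∑ r : Fin m, M (Sum.inl r) (Sum.inl c) • φ (b4 r : B)) +
        ∑ r : Fin n, M (Sum.inr r) (Sum.inl c) • (x * φ (b2 r : B)))
    (hM2 : ∀ c : Fin m, (φ ℓbar + x) ^ t * (x * φ (b3 c : B)) =
        (∑ r : Fin m, M (Sum.inl r) (Sum.inr c) • φ (b4 r : B)) +
        ∑ r : Fin n, M (Sum.inr r) (Sum.inr c) • (x * φ (b2 r : B)))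
    (hN1 : ∀ c : Fin n, ℓbar ^ (t - 1) * (b1 c : B) = ∑ r : Fin n, N1 r c • (b2 r : B))
    (hN2 : ∀ c : Fin m, ℓbar ^ (t + 1) * (b3 c : B) = ∑ r : Fin m, N2 r c • (b4 r : B)) :
    (M.submatrix (finSumFinEquiv.symm : Fin (m + n) → Fin m ⊕ Fin n)
        (fun j : Fin (m + n) =>
          (finSumFinEquiv.symm (finCongr (by omega : m + n = n + m) j) : Fin n ⊕ Fin m))).det
      = (-1 : k) ^ (m * (n + 1)) * N1.det * N2.det * (t : k) ^ ((n : ℤ) - (m : ℤ)) := by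
  obtain ⟨s, rfl⟩ : ∃ s, t = s + 1 := ⟨t - 1, by omega⟩
  simp only [Nat.add_sub_cancel] at hN1
  set c : k := (s : k) + 1 with hcdef
  have hc : c ≠ 0 := by simpa using htinv
  have csmul : ∀ bb : B, ((s : B) + 1) * bb = c • bb := by
    intro bb; rw [Algebra.smul_def]; simp [hcdef]
  -- the matrix of multiplication by ℓbar from degree i+t-1 to i+t
  have hLmem : ∀ u : Fin n, ℓbar * (b2 u : B) ∈ 𝒜 ((i : ℤ) + ((s : ℤ) + 1)) := by
    intro u
    exact mem_deg (by push_cast; ring) (hB.mul_mem hℓbar (b2 u).2)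
  have hLmem' : ∀ u : Fin n, ℓbar * (b2 u : B) ∈ 𝒜 ((i : ℤ) + ((s+1 : ℕ) : ℤ)) := by
    intro u; exact mem_deg (by push_cast; ring) (hLmem u)
  set L : Matrix (Fin m) (Fin n) k :=
    Matrix.of (fun r u => (b4.repr ⟨_, hLmem' u⟩) r) with hLdef
  have hL : ∀ u : Fin n, ℓbar * (b2 u : B) = ∑ r : Fin m, L r u • (b4 r : B) := by
    intro u
    have h := congrArg ((𝒜 ((i : ℤ) + ((s+1 : ℕ) : ℤ))).subtype) (b4.sum_repr ⟨_, hLmem' u⟩)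
    rw [map_sum] at h
    simp only [map_smul, Submodule.subtype_apply] at h
    exact h.symm
  -- linear independence
  have indep4 : ∀ g : Fin m → k, (∑ r, g r • (b4 r : B)) = 0 → ∀ r, g r = 0 := by
    intro g hg
    have h : (𝒜 ((i : ℤ) + ((s+1 : ℕ) : ℤ))).subtype (∑ r, g r • b4 r) = 0 := by
      rw [map_sum]
      simp only [map_smul, Submodule.subtype_apply]
      exact hg
    have h0 : (∑ r, g r • b4 r) = 0 :=
      Submodule.injective_subtype _ (by simpa using h)
    exact Fintype.linearIndependent_iff.mp b4.linearIndependent g h0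
  have indep2 : ∀ g : Fin n → k, (∑ r, g r • (b2 r : B)) = 0 → ∀ r, g r = 0 := by
    intro g hg
    have h : (𝒜 ((i : ℤ) + ((s+1 : ℕ) : ℤ) - 1)).subtype (∑ r, g r • b2 r) = 0 := by
      rw [map_sum]
      simp only [map_smul, Submodule.subtype_apply]
      exact hg
    have h0 : (∑ r, g r • b2 r) = 0 :=
      Submodule.injective_subtype _ (by simpa using h)
    exact Fintype.linearIndependent_iff.mp b2.linearIndependent g h0
  have cmp4 : ∀ (g g' : Fin m → k), (∑ r, g r • (b4 r : B)) = ∑ r, g' r • (b4 r : B) →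
      ∀ r, g r = g' r := by
    intro g g' hgg r
    have h := indep4 (fun r => g r - g' r) (by
      simp_rw [sub_smul]
      rw [Finset.sum_sub_distrib, hgg, sub_self]) r
    exact sub_eq_zero.mp h
  -- pushing φ through sums
  have push4 : ∀ g : Fin m → k, φ (∑ r, g r • (b4 r : B)) = ∑ r, g r • φ (b4 r : B) := by
    intro g; rw [map_sum]; simp_rw [map_smul]
  have push2 : ∀ g : Fin n → k, x * φ (∑ u, g u • (b2 u : B)) =
      ∑ u, g u • (x * φ (b2 u : B)) := by
    intro g; rw [map_sum, Finset.mul_sum]; simp_rw [map_smul, mul_smul_comm]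
  have indepA : ∀ (a : Fin m → k) (g : Fin n → k),
      (∑ r, a r • φ (b4 r : B)) + (∑ r, g r • (x * φ (b2 r : B))) = 0 →
      (∀ r, a r = 0) ∧ (∀ r, g r = 0) := by
    intro a g h
    have hb0mem : (∑ r, a r • (b4 r : B)) ∈ 𝒜 ((i : ℤ) + ((s+1 : ℕ) : ℤ)) :=
      Submodule.sum_mem _ fun r _ => Submodule.smul_mem _ _ (b4 r).2
    have hb1mem : (∑ r, g r • (b2 r : B)) ∈ 𝒜 ((i : ℤ) + ((s+1 : ℕ) : ℤ) - 1) :=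
      Submodule.sum_mem _ fun r _ => Submodule.smul_mem _ _ (b2 r).2
    have he : φ (∑ r, a r • (b4 r : B)) + x * φ (∑ r, g r • (b2 r : B)) = 0 := by
      rw [push4, push2]; exact h
    obtain ⟨h0, h1⟩ := unique2 hext hb0mem hb1mem he
    exact ⟨indep4 a h0, indep2 g h1⟩
  -- the expansion helper
  have expand : ∀ (g : Fin n → k) (w : B), w = ∑ u, g u • (b2 u : B) →
      ℓbar * w = ∑ r : Fin m, (∑ u, L r u * g u) • (b4 r : B) := by
    intro g w hw
    rw [hw, Finset.mul_sum]
    simp_rw [mul_smul_comm, hL, Finset.smul_sum, smul_smul]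
    rw [Finset.sum_comm]
    simp_rw [← Finset.sum_smul]
    exact Finset.sum_congr rfl fun r _ => by
      congr 1
      exact Finset.sum_congr rfl fun u _ => mul_comm _ _
  -- entries of M, left columns
  have hcolL : ∀ cc : Fin n,
      (∀ r, M (Sum.inl r) (Sum.inl cc) = ∑ u, L r u * N1 u cc) ∧
      (∀ r, M (Sum.inr r) (Sum.inl cc) = c * N1 r cc) := by
    intro cc
    have hA : ℓbar ^ (s + 1) * (b1 cc : B)
        = ∑ r : Fin m, (∑ u, L r u * N1 u cc) • (b4 r : B) := by
      rw [pow_succ', mul_assoc]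
      exact expand _ _ (hN1 cc)
    have hB2 : ((s : B) + 1) * (ℓbar ^ s * (b1 cc : B))
        = ∑ u : Fin n, (c * N1 u cc) • (b2 u : B) := by
      rw [hN1 cc, csmul, Finset.smul_sum]
      simp_rw [smul_smul]
    have hexp : (φ ℓbar + x) ^ (s + 1) * φ (b1 cc : B)
        = (∑ r : Fin m, (∑ u, L r u * N1 u cc) • φ (b4 r : B))
          + ∑ u : Fin n, (c * N1 u cc) • (x * φ (b2 u : B)) := by
      have hd := mul_decomp hext ℓbar s (b1 cc : B) 0
      rw [map_zero, mul_zero, add_zero] at hd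
      rw [hd]
      rw [show ((s : B) + 1) * (ℓbar ^ s * (b1 cc : B)) + ℓbar ^ (s + 1) * 0
        = ((s : B) + 1) * (ℓbar ^ s * (b1 cc : B)) by ring]
      rw [hA, hB2, push4, push2]
    have hzero : (∑ r : Fin m,
          (M (Sum.inl r) (Sum.inl cc) - ∑ u, L r u * N1 u cc) • φ (b4 r : B))
        + ∑ r : Fin n, (M (Sum.inr r) (Sum.inl cc) - c * N1 r cc) • (x * φ (b2 r : B)) = 0 := by
      simp_rw [sub_smul]
      rw [Finset.sum_sub_distrib, Finset.sum_sub_distrib, sub_add_sub_comm,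
        ← hM1 cc, ← hexp, sub_self]
    obtain ⟨h1, h2⟩ := indepA _ _ hzero
    exact ⟨fun r => sub_eq_zero.mp (h1 r), fun r => sub_eq_zero.mp (h2 r)⟩
  -- entries of M, right columns
  have hxcol : ∀ cc : Fin m, (φ ℓbar + x) ^ (s + 1) * (x * φ (b3 cc : B))
      = x * φ (ℓbar ^ (s + 1) * (b3 cc : B)) := by
    intro cc
    rw [ell_pow hext]
    simp only [map_mul, map_pow]
    linear_combination (((s : A) + 1) * φ ℓbar ^ s * φ (b3 cc : B)) * hext.x_pow
  have hwmem : ∀ cc : Fin m, ℓbar ^ (s + 1) * (b3 cc : B) ∈ 𝒜 ((i : ℤ) + ((s+1 : ℕ) : ℤ) - 1) :=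
    fun cc => mem_deg (by push_cast; ring) (hpow_mem hB hℓbar (b3 cc).2 (s + 1))
  have hcolR : ∀ cc : Fin m,
      (∀ r, M (Sum.inl r) (Sum.inr cc) = 0) ∧
      (ℓbar ^ (s + 1) * (b3 cc : B)
        = ∑ u : Fin n, M (Sum.inr u) (Sum.inr cc) • (b2 u : B)) := by
    intro cc
    have hmem0 : (∑ r, M (Sum.inl r) (Sum.inr cc) • (b4 r : B)) ∈ 𝒜 ((i : ℤ) + ((s+1 : ℕ) : ℤ)) :=
      Submodule.sum_mem _ fun r _ => Submodule.smul_mem _ _ (b4 r).2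
    have hmem1 : (∑ u, M (Sum.inr u) (Sum.inr cc) • (b2 u : B)) - ℓbar ^ (s + 1) * (b3 cc : B)
        ∈ 𝒜 ((i : ℤ) + ((s+1 : ℕ) : ℤ) - 1) :=
      Submodule.sub_mem _
        (Submodule.sum_mem _ fun r _ => Submodule.smul_mem _ _ (b2 r).2) (hwmem cc)
    have he : φ (∑ r, M (Sum.inl r) (Sum.inr cc) • (b4 r : B))
        + x * φ ((∑ u, M (Sum.inr u) (Sum.inr cc) • (b2 u : B))
            - ℓbar ^ (s + 1) * (b3 cc : B)) = 0 := by
      rw [map_sub, mul_sub, push4, push2, ← hxcol cc, hM2 cc]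
      abel
    obtain ⟨h0, h1⟩ := unique2 hext hmem0 hmem1 he
    refine ⟨indep4 _ h0, ?_⟩
    have := sub_eq_zero.mp h1
    exact this.symm
  -- N2 = L * Q
  have eq4 : ∀ (cc : Fin m) (r : Fin m),
      N2 r cc = ∑ u, L r u * M (Sum.inr u) (Sum.inr cc) := by
    intro cc r
    have hC : ℓbar ^ (s + 1 + 1) * (b3 cc : B)
        = ∑ r : Fin m, (∑ u, L r u * M (Sum.inr u) (Sum.inr cc)) • (b4 r : B) := by
      rw [pow_succ', mul_assoc]
      exact expand _ _ (hcolR cc).2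
    exact cmp4 _ _ ((hN2 cc).symm.trans hC) r
  -- block form of M
  set Q : Matrix (Fin n) (Fin m) k := Matrix.of (fun r cc => M (Sum.inr r) (Sum.inr cc)) with hQdef
  have hMblocks : M = Matrix.fromBlocks (L * N1) 0 (c • N1) Q := by
    ext rr cc
    rcases rr with r | r <;> rcases cc with u | u
    · simpa [Matrix.mul_apply] using (hcolL u).1 r
    · simpa using (hcolR u).1 r
    · simpa using (hcolL u).2 r
    · rfl
  have hN2L : L * Q = N2 := by
    ext r cc
    rw [Matrix.mul_apply]
    exact (eq4 cc r).symm
  -- determinant computation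
  by_cases hmn0 : m + n = 0
  · have hm0 : m = 0 := by omega
    have hn0 : n = 0 := by omega
    subst hm0; subst hn0
    simp [Matrix.det_isEmpty]
  haveI : NeZero (m + n) := ⟨hmn0⟩
  set e₁ : Fin (m + n) ≃ Fin m ⊕ Fin n := finSumFinEquiv.symm with he₁
  set e₂ : Fin (m + n) ≃ Fin n ⊕ Fin m :=
    (finCongr (by omega : m + n = n + m)).trans finSumFinEquiv.symm with he₂
  have hsub : (M.submatrix (finSumFinEquiv.symm : Fin (m + n) → Fin m ⊕ Fin n)
        (fun j : Fin (m + n) =>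
          (finSumFinEquiv.symm (finCongr (by omega : m + n = n + m) j) : Fin n ⊕ Fin m)))
      = M.submatrix ⇑e₁ ⇑e₂ := rfl
  rw [hsub]
  set W : Matrix (Fin m ⊕ Fin n) (Fin m ⊕ Fin n) k := Matrix.fromBlocks 1 (c⁻¹ • L) 0 1 with hW
  set K0 : Matrix (Fin m ⊕ Fin n) (Fin m ⊕ Fin n) k :=
    Matrix.fromBlocks ((-c⁻¹) • N2) 0 Q (c • N1) with hK0
  set J : Matrix (Fin m ⊕ Fin n) (Fin n ⊕ Fin m) k := Matrix.fromBlocks 0 1 1 0 with hJ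
  have hfact : M = W * (K0 * J) := by
    rw [hMblocks, hW, hK0, hJ, Matrix.fromBlocks_multiply, Matrix.fromBlocks_multiply]
    simp only [Matrix.mul_zero, Matrix.zero_mul, Matrix.mul_one, Matrix.one_mul,
      add_zero, zero_add, Matrix.mul_smul, Matrix.smul_mul, hN2L, smul_smul,
      inv_mul_cancel₀ hc, mul_inv_cancel₀ hc, one_smul, neg_smul, neg_add_cancel]
  rw [hfact, ← Matrix.submatrix_mul_equiv W (K0 * J) ⇑e₁ e₁ ⇑e₂,
    ← Matrix.submatrix_mul_equiv K0 J ⇑e₁ e₁ ⇑e₂, Matrix.det_mul, Matrix.det_mul,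
    Matrix.det_submatrix_equiv_self e₁ W, Matrix.det_submatrix_equiv_self e₁ K0]
  have hdW : W.det = 1 := by
    rw [hW, Matrix.det_fromBlocks_zero₂₁]
    simp
  have hdK0 : K0.det = ((-c⁻¹) ^ m * N2.det) * (c ^ n * N1.det) := by
    rw [hK0, Matrix.det_fromBlocks_zero₁₂, Matrix.det_smul, Matrix.det_smul]
    simp [Fintype.card_fin]
  -- the J determinant
  have Jent : ∀ (a : Fin m ⊕ Fin n) (b : Fin n ⊕ Fin m),
      J a b = if (Equiv.sumComm (Fin m) (Fin n)) a = b then 1 else 0 := by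
    intro a b
    rcases a with a | a <;> rcases b with b | b <;>
      simp [hJ, Matrix.one_apply, eq_comm]
  set σ : Equiv.Perm (Fin (m + n)) :=
    e₁.trans ((Equiv.sumComm (Fin m) (Fin n)).trans e₂.symm) with hσ
  have hJsub : J.submatrix ⇑e₁ ⇑e₂ = (1 : Matrix (Fin (m+n)) (Fin (m+n)) k).submatrix ⇑σ id := by
    ext ii jj
    rw [Matrix.submatrix_apply, Matrix.submatrix_apply, Jent, Matrix.one_apply, hσ]
    simp only [Equiv.trans_apply, id_eq]
    by_cases hcond : (Equiv.sumComm (Fin m) (Fin n)) (e₁ ii) = e₂ jj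
    · simp [hcond]
    · simp [hcond, Equiv.symm_apply_eq]
  have hdJ : (J.submatrix ⇑e₁ ⇑e₂).det = (-1 : k) ^ (m * n) := by
    rw [hJsub, Matrix.det_permute, Matrix.det_one, mul_one]
    have hσeq : σ = (finRotate (m + n)) ^ n := sigma_eq m n (by omega)
    have hsign : Equiv.Perm.sign σ = (-1 : ℤˣ) ^ ((m + n - 1) * n) := by
      rw [hσeq]
      obtain ⟨Mm, hMm⟩ : ∃ Mm, m + n = Mm + 1 := ⟨m + n - 1, by omega⟩
      have h1 : m + n - 1 = Mm := by omega
      rw [h1, hMm, map_pow, sign_finRotate, Nat.add_sub_cancel, ← pow_mul]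
    rw [hsign]
    have hpar : ((m + n - 1) * n) % 2 = (m * n) % 2 := by
      have h2 : (m + n - 1) % 2 = (m % 2 + n % 2 + 1) % 2 := by omega
      rw [Nat.mul_mod, Nat.mul_mod m n, h2]
      rcases Nat.mod_two_eq_zero_or_one m with hm | hm <;>
        rcases Nat.mod_two_eq_zero_or_one n with hn | hn <;>
        rw [hm, hn] <;> norm_num
    push_cast
    rw [neg_one_pow_eq_pow_mod_two, hpar, ← neg_one_pow_eq_pow_mod_two]
  rw [hdW, hdK0, hdJ, one_mul]
  have hct : ((s + 1 : ℕ) : k) = c := by push_cast [hcdef]; ring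
  rw [hct, zpow_sub₀ hc, zpow_natCast, zpow_natCast]
  rw [show (-c⁻¹) ^ m = (-1 : k) ^ m * (c ^ m)⁻¹ by
    rw [neg_pow, inv_pow]]
  rw [show m * (n + 1) = m * n + m by ring, pow_add]
  field_simp


/-- Let `A = B ⊗ₖ k[x]/(x²)`, `ℓ̄ ∈ B₁` a linear form, `ℓ = ℓ̄ + x`.
Fix `i, t ≥ 1`, assume `B_{i+t} ≠ 0` and `t` invertible in `k`.  Then
`·ℓ^t : A_i → A_{i+t}` has full rank iff `·ℓ̄^{t-1} : B_i → B_{i+t-1}` and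
`·ℓ̄^{t+1} : B_{i-1} → B_{i+t}` have full rank for the same reason; and if the matrices
`M̄_i^{t-1}`, `M̄_{i-1}^{t+1}` of these maps are square of sizes `n`, `m`, then the matrix
`M_i^t` of `·ℓ^t` (w.r.t. the concatenated bases) is square of size `n + m` and
`det M_i^t = (-1)^{m(n+1)} · det M̄_i^{t-1} · det M̄_{i-1}^{t+1} · t^{n-m}`. -/
theorem statement_1 {k B A : Type} [Field k]
    [CommRing B] [Algebra k B] [CommRing A] [Algebra k A]
    (𝒜 : ℤ → Submodule k B) (ℬ : ℤ → Submodule k A)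
    (hB : IsStdGradedArtinian k B 𝒜) (hA : IsStdGradedArtinian k A ℬ)
    (φ : B →ₐ[k] A) (x : A) (hext : IsCIExtension 𝒜 ℬ φ x 2)
    (ℓbar : B) (hℓbar : ℓbar ∈ 𝒜 1)
    (i t : ℕ) (hi : 1 ≤ i) (ht : 1 ≤ t)
    (hBit : 𝒜 ((i : ℤ) + t) ≠ ⊥) (htinv : (t : k) ≠ 0) :
    (MulFullRank (ℬ (i : ℤ)) (ℬ ((i : ℤ) + t)) ((φ ℓbar + x) ^ t) ↔
      ((MulInjOn (𝒜 (i : ℤ)) (ℓbar ^ (t - 1)) ∧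
          MulInjOn (𝒜 ((i : ℤ) - 1)) (ℓbar ^ (t + 1))) ∨
       (MulSurjOnto (𝒜 (i : ℤ)) (𝒜 ((i : ℤ) + t - 1)) (ℓbar ^ (t - 1)) ∧
          MulSurjOnto (𝒜 ((i : ℤ) - 1)) (𝒜 ((i : ℤ) + t)) (ℓbar ^ (t + 1)))))
    ∧
    (∀ (n m : ℕ)
      (b1 : Module.Basis (Fin n) k (𝒜 (i : ℤ))) (b2 : Module.Basis (Fin n) k (𝒜 ((i : ℤ) + t - 1)))
      (b3 : Module.Basis (Fin m) k (𝒜 ((i : ℤ) - 1))) (b4 : Module.Basis (Fin m) k (𝒜 ((i : ℤ) + t)))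
      (M : Matrix (Fin m ⊕ Fin n) (Fin n ⊕ Fin m) k)
      (N1 : Matrix (Fin n) (Fin n) k) (N2 : Matrix (Fin m) (Fin m) k),
      (∀ c : Fin n, (φ ℓbar + x) ^ t * φ (b1 c : B) =
          (∑ r : Fin m, M (Sum.inl r) (Sum.inl c) • φ (b4 r : B)) +
          ∑ r : Fin n, M (Sum.inr r) (Sum.inl c) • (x * φ (b2 r : B))) →
      (∀ c : Fin m, (φ ℓbar + x) ^ t * (x * φ (b3 c : B)) =
          (∑ r : Fin m, M (Sum.inl r) (Sum.inr c) • φ (b4 r : B)) +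
          ∑ r : Fin n, M (Sum.inr r) (Sum.inr c) • (x * φ (b2 r : B))) →
      (∀ c : Fin n, ℓbar ^ (t - 1) * (b1 c : B) = ∑ r : Fin n, N1 r c • (b2 r : B)) →
      (∀ c : Fin m, ℓbar ^ (t + 1) * (b3 c : B) = ∑ r : Fin m, N2 r c • (b4 r : B)) →
      (M.submatrix (finSumFinEquiv.symm : Fin (m + n) → Fin m ⊕ Fin n)
          (fun j : Fin (m + n) =>
            (finSumFinEquiv.symm (finCongr (by omega : m + n = n + m) j) : Fin n ⊕ Fin m))).det
        = (-1 : k) ^ (m * (n + 1)) * N1.det * N2.det * (t : k) ^ ((n : ℤ) - (m : ℤ))) := by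
  constructor
  · exact part1 hB hext hℓbar i t ht htinv
  · intro n m b1 b2 b3 b4 M N1 N2 h1 h2 h3 h4
    exact part2 hB hext hℓbar i t ht htinv n m b1 b2 b3 b4 M N1 N2 h1 h2 h3 h4
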